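/- Triangle-inequality framework lemma: Let (S, dist) be a metric space, and let (P_t)_{t≥0} and (Q_t)_{t≥0} be families of maps from S to S such that Q_{s+t} = Q_t ∘ Q_s for all s, t ≥ 0. Suppose there are a point π ∈ S and constants C, β > 0 such that dist(P_t(μ), π) ≤ C e^{−β t} · dist(μ, π) for all μ ∈ S and all t ≥ 0, and suppose that for every T > 0 there is a constant ε(T) ≥ 0 such that dist(Q_t(μ), P_t(μ)) ≤ ε(T) for all μ ∈ S and all 0 ≤ t ≤ T. Then there exist constants T₀ > 0 and λ > 0, depending only on C and β, such that for every ν ∈ S and every t ≥ 0, dist(Q_t(ν), π) ≤ 2 ε(T₀) + 2 M₀ e^{−λ t}, where M₀ = sup_{s ∈ [0, T₀]} dist(Q_s(ν), π) (this supremum is finite under the stated hypotheses). -/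

import Mathlib

/-- **Triangle-inequality framework lemma.**  If `P` is geometrically ergodic towards `π`
with constants `C, β`, and `Q` is a semigroup-like family of maps that stays within `ε(T)`
of `P` on every finite time horizon `[0, T]`, then there are `T₀, λ > 0`, depending only on
`C` and `β`, such that `dist (Q t ν) π ≤ 2 ε(T₀) + 2 M₀ e^{−λ t}` for all `ν` and `t ≥ 0`,
where `M₀ = sup_{s ∈ [0, T₀]} dist (Q s ν) π`. -/
theorem triangle_inequality_framework (C β : ℝ) (hC : 0 < C) (hβ : 0 < β) :
    ∃ T₀ > (0 : ℝ), ∃ lam > (0 : ℝ),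
      ∀ (S : Type*) [MetricSpace S] (P Q : ℝ → S → S) (π : S) (ε : ℝ → ℝ),
        (∀ s t : ℝ, 0 ≤ s → 0 ≤ t → Q (s + t) = Q t ∘ Q s) →
        (∀ (μ : S) (t : ℝ), 0 ≤ t → dist (P t μ) π ≤ C * Real.exp (-β * t) * dist μ π) →
        (∀ T : ℝ, 0 < T →
          0 ≤ ε T ∧ ∀ (μ : S) (t : ℝ), 0 ≤ t → t ≤ T → dist (Q t μ) (P t μ) ≤ ε T) →
        ∀ (ν : S) (t : ℝ), 0 ≤ t →
          dist (Q t ν) π ≤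
            2 * ε T₀ + 2 * (⨆ s : Set.Icc (0 : ℝ) T₀, dist (Q s ν) π) * Real.exp (-lam * t) := by
  set T₁ : ℝ := (max (Real.log (2 * C)) 0 + 1) / β with hT₁def
  have hT₁pos : 0 < T₁ := by
    apply div_pos _ hβ
    have : (0:ℝ) ≤ max (Real.log (2 * C)) 0 := le_max_right _ _
    linarith
  have hβT₁ : Real.log (2 * C) ≤ β * T₁ := by
    rw [hT₁def, mul_div_cancel₀ _ hβ.ne']
    have := le_max_left (Real.log (2 * C)) 0
    linarith
  have hcontr : ∀ r : ℝ, T₁ ≤ r → C * Real.exp (-β * r) ≤ 1 / 2 := by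
    intro r hr
    have h1 : Real.exp (-β * r) ≤ Real.exp (-Real.log (2 * C)) := by
      apply Real.exp_le_exp.2
      have : β * T₁ ≤ β * r := mul_le_mul_of_nonneg_left hr hβ.le
      linarith
    have h2 : Real.exp (-Real.log (2 * C)) = 1 / (2 * C) := by
      rw [Real.exp_neg, Real.exp_log (by linarith)]
      simp
    calc C * Real.exp (-β * r) ≤ C * (1 / (2 * C)) := by
          rw [← h2]; exact mul_le_mul_of_nonneg_left h1 hC.le
      _ = 1 / 2 := by field_simp
  clear_value T₁
  refine ⟨2 * T₁, by linarith, Real.log 2 / (2 * T₁),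
    div_pos (Real.log_pos one_lt_two) (by linarith), ?_⟩
  set lam := Real.log 2 / (2 * T₁) with hlamdef
  intro S _ P Q π ε hQ hP hε ν t ht
  obtain ⟨hε0, hεb⟩ := hε (2 * T₁) (by linarith)
  set E := ε (2 * T₁) with hEdef
  set M₀ := ⨆ s : Set.Icc (0 : ℝ) (2 * T₁), dist (Q (s : ℝ) ν) π with hM₀def
  have hBdd : BddAbove (Set.range fun s : Set.Icc (0 : ℝ) (2 * T₁) => dist (Q (s : ℝ) ν) π) := by
    refine ⟨E + C * dist ν π, ?_⟩
    rintro x ⟨⟨s, hs0, hs2⟩, rfl⟩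
    calc dist (Q s ν) π ≤ dist (Q s ν) (P s ν) + dist (P s ν) π := dist_triangle _ _ _
      _ ≤ E + C * Real.exp (-β * s) * dist ν π := add_le_add (hεb ν s hs0 hs2) (hP ν s hs0)
      _ ≤ E + C * 1 * dist ν π := by
          gcongr
          exact Real.exp_le_one_iff.2 (by nlinarith [mul_nonneg hβ.le hs0])
      _ = E + C * dist ν π := by ring
  have hM : ∀ s : ℝ, 0 ≤ s → s ≤ 2 * T₁ → dist (Q s ν) π ≤ M₀ := fun s hs hs' =>
    le_ciSup hBdd (⟨s, hs, hs'⟩ : Set.Icc (0 : ℝ) (2 * T₁))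
  have hM0 : 0 ≤ M₀ := le_trans dist_nonneg (hM 0 le_rfl (by linarith))
  clear_value M₀ E lam
  -- key induction along multiples of T₁
  have key : ∀ n : ℕ, dist (Q (n * T₁) ν) π ≤ 2 * E + (1 / 2) ^ n * (M₀ - 2 * E) := by
    intro n
    induction n with
    | zero => simpa using hM 0 le_rfl (by linarith)
    | succ n ih =>
      have hn0 : (0:ℝ) ≤ n * T₁ := by positivity
      have hstep : ((n + 1 : ℕ) : ℝ) * T₁ = n * T₁ + T₁ := by push_cast; ring
      rw [hstep, hQ (n * T₁) T₁ hn0 hT₁pos.le]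
      set μ := Q (n * T₁) ν with hμ
      calc dist (Q T₁ μ) π ≤ dist (Q T₁ μ) (P T₁ μ) + dist (P T₁ μ) π := dist_triangle _ _ _
        _ ≤ E + C * Real.exp (-β * T₁) * dist μ π :=
            add_le_add (hεb μ T₁ hT₁pos.le (by linarith)) (hP μ T₁ hT₁pos.le)
        _ ≤ E + (1 / 2) * dist μ π := by
            gcongr
            exact hcontr T₁ le_rfl
        _ ≤ E + (1 / 2) * (2 * E + (1 / 2) ^ n * (M₀ - 2 * E)) := by
            gcongr
        _ = 2 * E + (1 / 2) ^ (n + 1) * (M₀ - 2 * E) := by ring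
  by_cases hcase : t ≤ 2 * T₁
  · have h1 : dist (Q t ν) π ≤ M₀ := hM t ht hcase
    have h2 : (1:ℝ) / 2 ≤ Real.exp (-lam * t) := by
      have hlt : lam * t ≤ Real.log 2 := by
        rw [hlamdef, div_mul_eq_mul_div, div_le_iff₀ (by linarith)]
        have h2' : 0 ≤ Real.log 2 := Real.log_nonneg one_le_two
        nlinarith
      have h3 : Real.exp (-Real.log 2) = 1/2 := by
        rw [Real.exp_neg, Real.exp_log two_pos]; norm_num
      calc (1:ℝ)/2 = Real.exp (-Real.log 2) := h3.symm
        _ ≤ Real.exp (-lam * t) := Real.exp_le_exp.2 (by linarith)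
    nlinarith [Real.exp_pos (-lam * t)]
  · push_neg at hcase
    have htT : (2:ℝ) < t / T₁ := by
      rw [lt_div_iff₀ hT₁pos]; linarith
    obtain ⟨m, hmdef⟩ : ∃ m : ℕ, m = ⌊t / T₁⌋₊ := ⟨_, rfl⟩
    have hm2 : 2 ≤ m := by rw [hmdef]; exact Nat.le_floor (by exact_mod_cast htT.le)
    obtain ⟨n, hmn⟩ : ∃ n : ℕ, m = n + 1 := ⟨m - 1, by omega⟩
    have hfloor_le : (m : ℝ) ≤ t / T₁ := by rw [hmdef]; exact Nat.floor_le (by positivity)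
    have hlt_floor : t / T₁ < m + 1 := by rw [hmdef]; exact Nat.lt_floor_add_one _
    have hncast : ((n : ℝ)) = (m : ℝ) - 1 := by rw [hmn]; push_cast; ring
    have hmul : (m : ℝ) * T₁ ≤ t := by
      have h := mul_le_mul_of_nonneg_right hfloor_le hT₁pos.le
      rwa [div_mul_cancel₀ _ hT₁pos.ne'] at h
    have hmul2 : t < ((m : ℝ) + 1) * T₁ := by
      have h := mul_lt_mul_of_pos_right hlt_floor hT₁pos
      rwa [div_mul_cancel₀ _ hT₁pos.ne'] at h
    have hn_le : (n : ℝ) * T₁ ≤ t - T₁ := by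
      rw [hncast]; nlinarith
    have ht_lt : t < ((n : ℝ) + 2) * T₁ := by
      have hh : (((m:ℝ)) - 1 + 2) * T₁ = ((m:ℝ) + 1) * T₁ := by ring
      rw [hncast, hh]; linarith
    obtain ⟨r, hrdef⟩ : ∃ r : ℝ, r = t - n * T₁ := ⟨_, rfl⟩
    have hr1 : T₁ ≤ r := by rw [hrdef]; linarith
    have hr2 : r ≤ 2 * T₁ := by rw [hrdef]; nlinarith
    have hr0 : 0 ≤ r := le_trans hT₁pos.le hr1
    have hsplit : t = n * T₁ + r := by rw [hrdef]; ring
    obtain ⟨μ, hμ⟩ : ∃ μ : S, μ = Q ((n : ℝ) * T₁) ν := ⟨_, rfl⟩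
    have hQt : Q t ν = Q r μ := by
      rw [hsplit, hQ ((n:ℝ) * T₁) r (by positivity) hr0, hμ]; rfl
    rw [hQt]
    have hkey : dist μ π ≤ 2 * E + (1 / 2) ^ n * (M₀ - 2 * E) := by rw [hμ]; exact key n
    have main : dist (Q r μ) π ≤ 2 * E + (1 / 2) ^ (n + 1) * M₀ := by
      calc dist (Q r μ) π ≤ dist (Q r μ) (P r μ) + dist (P r μ) π := dist_triangle _ _ _
        _ ≤ E + C * Real.exp (-β * r) * dist μ π :=
            add_le_add (hεb μ r hr0 hr2) (hP μ r hr0)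
        _ ≤ E + (1 / 2) * dist μ π := by gcongr; exact hcontr r hr1
        _ ≤ E + (1 / 2) * (2 * E + (1 / 2) ^ n * (M₀ - 2 * E)) := by gcongr
        _ = 2 * E + (1 / 2) ^ (n + 1) * M₀ - (1 / 2) ^ n * E := by ring
        _ ≤ 2 * E + (1 / 2) ^ (n + 1) * M₀ := by
            have : (0:ℝ) ≤ (1 / 2) ^ n * E := by positivity
            linarith
    refine main.trans ?_
    have hexp : (1 / 2 : ℝ) ^ (n + 1) ≤ 2 * Real.exp (-lam * t) := by
      have e1 : Real.exp (-lam * t) ≥ Real.exp (-lam * (((n:ℝ) + 2) * T₁)) := by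
        apply Real.exp_le_exp.2
        have hlam0 : 0 < lam := by
          rw [hlamdef]
          exact div_pos (Real.log_pos one_lt_two) (by linarith)
        nlinarith
      have e2 : Real.exp (-lam * (((n:ℝ) + 2) * T₁)) =
          Real.exp (-(((n:ℝ) + 2) / 2) * Real.log 2) := by
        congr 1
        rw [hlamdef]
        field_simp
      have e3 : Real.exp (-(((n:ℝ) + 2) / 2) * Real.log 2) = (2:ℝ) ^ (-(((n:ℝ) + 2) / 2)) := by
        rw [Real.rpow_def_of_pos two_pos, mul_comm]
      have e4 : ((1:ℝ) / 2) ^ (n + 1) = (2:ℝ) ^ (-((n:ℝ) + 1)) := by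
        rw [← Real.rpow_natCast (1/2 : ℝ) (n+1), Real.rpow_neg two_pos.le,
          ← Real.inv_rpow two_pos.le]
        push_cast
        norm_num
      rw [e4]
      calc (2:ℝ) ^ (-((n:ℝ) + 1)) ≤ (2:ℝ) ^ ((1:ℝ) + -(((n:ℝ) + 2) / 2)) := by
            apply Real.rpow_le_rpow_of_exponent_le one_le_two
            have : (0:ℝ) ≤ (n:ℝ) := Nat.cast_nonneg n
            linarith
        _ = 2 * (2:ℝ) ^ (-(((n:ℝ) + 2) / 2)) := by
            rw [Real.rpow_add two_pos, Real.rpow_one]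
        _ ≤ 2 * Real.exp (-lam * t) := by rw [← e3, ← e2]; linarith
    have hfin : (1/2:ℝ) ^ (n + 1) * M₀ ≤ 2 * Real.exp (-lam * t) * M₀ :=
      mul_le_mul_of_nonneg_right hexp hM0
    linarith
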